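/- arXiv:2508.10793 — 7 statements merged into one kernel-verified Lean document; each statement's English description precedes it below -/
import Mathlib

section
/- Fix an integer n ≥ 1 and a real k > 0, and for i ∈ {0,…,n−1} define f_i : ℝ → ℝ² by f_i(t) = e^{kt}·(cos(t − 2πi/n), sin(t − 2πi/n)). Then (i) for every i, f_i(t) → (0,0) as t → −∞, and (ii) for every point A ∈ ℝ² with A ≠ (0,0), there exist an index i ∈ {0,…,n−1}, a parameter t ∈ ℝ and a scalar λ ∈ [0,1] such that A = λ · f_i(t) (i.e., A lies on the segment from the origin to f_i(t), so A is exposed by agent i). -/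
open Real Filter

/-- For `n ≥ 1`, `k > 0` and the uniform-spiral trajectories
`f_i(t) = e^{kt}(cos(t - 2πi/n), sin(t - 2πi/n))`, every `f_i` tends to the origin as
`t → -∞`, and every nonzero point `A` of the plane is exposed by some agent, i.e.
`A = λ • f_i t` for some `i`, `t` and `λ ∈ [0,1]`. -/
theorem statement_2 (n : ℕ) (hn : 1 ≤ n) (k : ℝ) (hk : 0 < k) :
    let f : Fin n → ℝ → EuclideanSpace ℝ (Fin 2) :=
      fun i t => WithLp.toLp 2 ![Real.exp (k * t) * Real.cos (t - 2 * π * ((i : ℕ) : ℝ) / n),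
                   Real.exp (k * t) * Real.sin (t - 2 * π * ((i : ℕ) : ℝ) / n)]
    (∀ i, Tendsto (f i) atBot (nhds 0)) ∧
    (∀ A : EuclideanSpace ℝ (Fin 2), A ≠ 0 →
      ∃ (i : Fin n) (t : ℝ) (l : ℝ), l ∈ Set.Icc (0 : ℝ) 1 ∧ A = l • f i t) := by
  intro f
  constructor
  · intro i
    have hnorm : ∀ t, ‖f i t‖ = Real.exp (k * t) := by
      intro t
      rw [EuclideanSpace.norm_eq]
      have : ∑ j : Fin 2, ‖(f i t) j‖ ^ 2 = Real.exp (k * t) ^ 2 := by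
        simp [f, Fin.sum_univ_two, mul_pow]
        rw [← mul_add]
        rw [Real.cos_sq_add_sin_sq]
        ring
      rw [this, Real.sqrt_sq (Real.exp_nonneg _)]
    have h1 : Tendsto (fun t : ℝ => k * t) atBot atBot :=
      Tendsto.const_mul_atBot hk tendsto_id
    exact squeeze_zero_norm (fun t => (hnorm t).le) (Real.tendsto_exp_atBot.comp h1)
  · intro A hA
    set x := A 0 with hx
    set y := A 1 with hy
    set z : ℂ := ⟨x, y⟩ with hz
    have hzne : z ≠ 0 := by
      intro h
      apply hA
      have hx0 : x = 0 := by simpa using congrArg Complex.re h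
      have hy0 : y = 0 := by simpa using congrArg Complex.im h
      ext j
      fin_cases j <;> simpa [hx, hy] using (by assumption : _)
    set r := ‖z‖ with hr
    have hrpos : 0 < r := by simpa [hr] using norm_pos_iff.mpr hzne
    set θ := Complex.arg z with hθ
    -- choose m so that θ + 2π m ≥ log r / k
    obtain ⟨m, hm⟩ := exists_nat_ge ((Real.log r / k - θ) / (2 * π))
    set t := θ + m * (2 * π) with ht
    have htlarge : Real.log r / k ≤ t := by
      have h2π : 0 < 2 * π := by positivity
      have := (div_le_iff₀ h2π).mp hm
      linarith [this]
    have hle : r ≤ Real.exp (k * t) := by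
      have : Real.log r ≤ k * t := by
        rw [div_le_iff₀ hk] at htlarge
        linarith
      calc r = Real.exp (Real.log r) := (Real.exp_log hrpos).symm
        _ ≤ Real.exp (k * t) := Real.exp_le_exp.mpr this
    set l := r * Real.exp (-(k * t)) with hl
    have hlpos : 0 < l := by positivity
    have hl1 : l ≤ 1 := by
      rw [hl]
      rw [mul_comm]
      rw [← Real.exp_log hrpos, ← Real.exp_add]
      apply Real.exp_le_one_iff.mpr
      have : Real.log r ≤ k * t := by
        rw [div_le_iff₀ hk] at htlarge; linarith
      linarith
    refine ⟨⟨0, hn⟩, t, l, ⟨le_of_lt hlpos, hl1⟩, ?_⟩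
    have hcos : Real.cos t = Real.cos θ := by
      rw [ht]; exact Real.cos_add_nat_mul_two_pi θ m
    have hsin : Real.sin t = Real.sin θ := by
      rw [ht]; exact Real.sin_add_nat_mul_two_pi θ m
    have hlx : l * (Real.exp (k * t) * Real.cos t) = x := by
      have hc : Real.cos θ = x / r := by
        rw [hθ, hr, Complex.cos_arg hzne]
      have he : Real.exp (-(k * t)) * Real.exp (k * t) = 1 := by
        rw [← Real.exp_add]; simp
      rw [hl, hcos, hc]
      field_simp
      linear_combination x * he
    have hly : l * (Real.exp (k * t) * Real.sin t) = y := by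
      have hs : Real.sin θ = y / r := by
        rw [hθ, hr, Complex.sin_arg]
      have he : Real.exp (-(k * t)) * Real.exp (k * t) = 1 := by
        rw [← Real.exp_add]; simp
      rw [hl, hsin, hs]
      field_simp
      linear_combination y * he
    ext j
    fin_cases j
    · show x = l • (f ⟨0, hn⟩ t) 0
      simp [f]
      rw [← hlx]
    · show y = l • (f ⟨0, hn⟩ t) 1
      simp [f]
      rw [← hly]
end

section
/- For every real a > 0, the function z : (0,∞) → ℝ defined by z(k) = (√(1+k²)/k)·e^{k/a} is strictly convex on (0,∞); in fact its second derivative is strictly positive at every k > 0. -/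
open Real

/-- For every `a > 0`, the function `z k = (√(1+k²)/k) e^{k/a}` is strictly
convex on `(0,∞)`, and its second derivative is strictly positive at every `k > 0`. -/
theorem statement_3 (a : ℝ) (ha : 0 < a) :
    let z : ℝ → ℝ := fun k => Real.sqrt (1 + k ^ 2) / k * Real.exp (k / a)
    StrictConvexOn ℝ (Set.Ioi (0 : ℝ)) z ∧
      ∀ k : ℝ, 0 < k → 0 < deriv (deriv z) k := by
  intro z
  have ha' : a ≠ 0 := ne_of_gt ha
  have hspos : ∀ k : ℝ, 0 < Real.sqrt (1 + k ^ 2) := fun k =>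
    Real.sqrt_pos.2 (by positivity)
  have hs2 : ∀ k : ℝ, Real.sqrt (1 + k ^ 2) ^ 2 = 1 + k ^ 2 := fun k =>
    Real.sq_sqrt (by positivity)
  have hsd : ∀ k : ℝ, HasDerivAt (fun x : ℝ => Real.sqrt (1 + x ^ 2))
      (k / Real.sqrt (1 + k ^ 2)) k := by
    intro k
    have h1 : HasDerivAt (fun x : ℝ => 1 + x ^ 2) (2 * k) k := by
      simpa using ((hasDerivAt_pow 2 k).const_add 1)
    have h2 := (Real.hasDerivAt_sqrt (by positivity : (1:ℝ) + k ^ 2 ≠ 0)).comp k h1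
    refine h2.congr_deriv (Eq.symm ?_)
    have := (hspos k).ne'
    field_simp
  have hexp : ∀ k : ℝ, HasDerivAt (fun x : ℝ => Real.exp (x / a))
      (Real.exp (k / a) * (1 / a)) k := fun k =>
    ((hasDerivAt_id k).div_const a).exp
  -- first derivative
  set z1 : ℝ → ℝ := fun k =>
    (-((Real.sqrt (1 + k ^ 2) * k ^ 2)⁻¹) + Real.sqrt (1 + k ^ 2) / k * a⁻¹) *
      Real.exp (k / a) with hz1def
  have hz1 : ∀ k : ℝ, 0 < k → HasDerivAt z (z1 k) k := by
    intro k hk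
    have hk0 : k ≠ 0 := hk.ne'
    have hs0 : Real.sqrt (1 + k ^ 2) ≠ 0 := (hspos k).ne'
    have h0 : HasDerivAt (fun x : ℝ => Real.sqrt (1 + x ^ 2) / x)
        ((k / Real.sqrt (1 + k ^ 2) * k - Real.sqrt (1 + k ^ 2) * 1) / k ^ 2) k :=
      (hsd k).div (hasDerivAt_id k) hk0
    have h := h0.mul (hexp k)
    refine h.congr_deriv (Eq.symm ?_)
    rw [hz1def]
    beta_reduce
    have h2 : Real.sqrt (1 + k ^ 2) ^ 2 = 1 + k ^ 2 := hs2 k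
    set s := Real.sqrt (1 + k ^ 2) with hs
    have h3 : s ^ 3 = (1 + k ^ 2) * s := by rw [← h2]; ring
    have h4 : s ^ 4 = (1 + k ^ 2) ^ 2 := by rw [← h2]; ring
    have h5 : s ^ 5 = (1 + k ^ 2) ^ 2 * s := by rw [← h2]; ring
    have h6 : s ^ 6 = (1 + k ^ 2) ^ 3 := by rw [← h2]; ring
    have h7 : s ^ 7 = (1 + k ^ 2) ^ 3 * s := by rw [← h2]; ring
    have h8 : s ^ 8 = (1 + k ^ 2) ^ 4 := by rw [← h2]; ring
    have h9 : s ^ 9 = (1 + k ^ 2) ^ 4 * s := by rw [← h2]; ring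
    field_simp
    ring_nf
    simp only [h9, h8, h7, h6, h5, h4, h3, h2]
    ring_nf
  -- second derivative
  set z2 : ℝ → ℝ := fun k =>
    Real.exp (k / a) *
      ((((1 + k ^ 2) * k - a) ^ 2 + a ^ 2 * (3 * k ^ 2 + 1)) /
        (Real.sqrt (1 + k ^ 2) ^ 3 * k ^ 3 * a ^ 2)) with hz2def
  have hz2 : ∀ k : ℝ, 0 < k → HasDerivAt z1 (z2 k) k := by
    intro k hk
    have hk0 : k ≠ 0 := hk.ne'
    have hs0 : Real.sqrt (1 + k ^ 2) ≠ 0 := (hspos k).ne'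
    have hprod : HasDerivAt (fun x : ℝ => Real.sqrt (1 + x ^ 2) * x ^ 2)
        (k / Real.sqrt (1 + k ^ 2) * k ^ 2 + Real.sqrt (1 + k ^ 2) * (2 * k)) k := by
      have := (hsd k).mul (hasDerivAt_pow 2 k)
      simpa [mul_comm, Pi.mul_def] using this
    have hinv := (hprod.inv (mul_ne_zero hs0 (pow_ne_zero 2 hk0))).neg
    have hu2 : HasDerivAt (fun x : ℝ => Real.sqrt (1 + x ^ 2) / x * a⁻¹)
        ((k / Real.sqrt (1 + k ^ 2) * k - Real.sqrt (1 + k ^ 2) * 1) / k ^ 2 * a⁻¹) k :=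
      ((hsd k).div (hasDerivAt_id k) hk0).mul_const a⁻¹
    have hu := hinv.add hu2
    have h := hu.mul (hexp k)
    refine h.congr_deriv (Eq.symm ?_)
    rw [hz2def]
    simp only [Pi.add_apply, Pi.neg_apply, Pi.inv_apply]
    have h2 : Real.sqrt (1 + k ^ 2) ^ 2 = 1 + k ^ 2 := hs2 k
    set s := Real.sqrt (1 + k ^ 2) with hs
    have h3 : s ^ 3 = (1 + k ^ 2) * s := by rw [← h2]; ring
    have h4 : s ^ 4 = (1 + k ^ 2) ^ 2 := by rw [← h2]; ring
    have h5 : s ^ 5 = (1 + k ^ 2) ^ 2 * s := by rw [← h2]; ring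
    have h6 : s ^ 6 = (1 + k ^ 2) ^ 3 := by rw [← h2]; ring
    have h7 : s ^ 7 = (1 + k ^ 2) ^ 3 * s := by rw [← h2]; ring
    have h8 : s ^ 8 = (1 + k ^ 2) ^ 4 := by rw [← h2]; ring
    have h9 : s ^ 9 = (1 + k ^ 2) ^ 4 * s := by rw [← h2]; ring
    field_simp
    ring_nf
    simp only [h9, h8, h7, h6, h5, h4, h3, h2]
    ring_nf
  have hz2pos : ∀ k : ℝ, 0 < k → 0 < z2 k := by
    intro k hk
    rw [hz2def]
    have := hspos k
    positivity
  -- deriv z = z1 on Ioi 0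
  have hderiv1 : ∀ k : ℝ, 0 < k → deriv z k = z1 k := fun k hk => (hz1 k hk).deriv
  have hderiv2 : ∀ k : ℝ, 0 < k → deriv (deriv z) k = z2 k := by
    intro k hk
    have hev : deriv z =ᶠ[nhds k] z1 := by
      filter_upwards [Ioi_mem_nhds hk] with x hx using hderiv1 x hx
    rw [hev.deriv_eq]
    exact (hz2 k hk).deriv
  constructor
  · apply strictConvexOn_of_deriv2_pos (convex_Ioi 0)
    · intro x hx
      exact ((hz1 x hx).differentiableAt.continuousAt).continuousWithinAt
    · intro x hx
      rw [interior_Ioi] at hx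
      have : deriv^[2] z x = deriv (deriv z) x := by
        simp [Function.iterate_succ, Function.iterate_one]
      rw [this, hderiv2 x hx]
      exact hz2pos x hx
  · intro k hk
    rw [hderiv2 k hk]
    exact hz2pos k hk
end

section
/- For real n > 0, let κ_n denote the unique positive real root of x³ + x = n/(2π), and define U_n := (√(1+κ_n²)/κ_n)·e^{2πκ_n/n}. Then the function n ↦ U_n is strictly decreasing on (0,∞), and U_n → 1 as n → ∞. -/
open Real Filter

private lemma cubic_strictMono : StrictMono (fun x : ℝ => x ^ 3 + x) :=
  (Odd.strictMono_pow (by decide)).add_monotone monotone_id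

private lemma sqrt_div_eq (t : ℝ) (ht : 0 < t) :
    Real.sqrt (1 + t ^ 2) / t = Real.sqrt (1 / t ^ 2 + 1) := by
  rw [show (1 / t ^ 2 + 1 : ℝ) = (1 + t ^ 2) / t ^ 2 by field_simp,
    Real.sqrt_div (by positivity), Real.sqrt_sq ht.le]

private lemma g_antiOn : StrictAntiOn
    (fun t : ℝ => Real.sqrt (1 + t ^ 2) / t * Real.exp (1 / (1 + t ^ 2)))
    (Set.Ioi 0) := by
  intro a ha b hb hab
  simp only [Set.mem_Ioi] at ha hb
  have h1 : Real.sqrt (1 + b ^ 2) / b < Real.sqrt (1 + a ^ 2) / a := by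
    rw [sqrt_div_eq a ha, sqrt_div_eq b hb]
    apply Real.sqrt_lt_sqrt (by positivity)
    have : 1 / b ^ 2 < 1 / a ^ 2 :=
      one_div_lt_one_div_of_lt (by positivity) (by nlinarith)
    linarith
  have h2 : Real.exp (1 / (1 + b ^ 2)) ≤ Real.exp (1 / (1 + a ^ 2)) := by
    apply Real.exp_le_exp.2
    exact le_of_lt (one_div_lt_one_div_of_lt (by positivity) (by nlinarith))
  exact mul_lt_mul h1 h2 (Real.exp_pos _) (by positivity)

private lemma g_tendsto : Tendsto
    (fun t : ℝ => Real.sqrt (1 + t ^ 2) / t * Real.exp (1 / (1 + t ^ 2)))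
    atTop (nhds 1) := by
  have h1 : Tendsto (fun t : ℝ => Real.sqrt (1 + t ^ 2) / t) atTop (nhds 1) := by
    have h0 : Tendsto (fun t : ℝ => 1 / t ^ 2 + 1) atTop (nhds 1) := by
      have hinv : Tendsto (fun t : ℝ => 1 / t ^ 2) atTop (nhds 0) := by
        have h : Tendsto (fun t : ℝ => t ^ 2) atTop atTop := tendsto_pow_atTop two_ne_zero
        simpa [Function.comp_def, one_div] using tendsto_inv_atTop_zero.comp h
      simpa using hinv.add (tendsto_const_nhds (x := (1 : ℝ)))
    have hs : Tendsto (fun t : ℝ => Real.sqrt (1 / t ^ 2 + 1)) atTop (nhds 1) := by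
      have := (Real.continuous_sqrt.tendsto 1).comp h0
      simpa [Function.comp_def] using this
    refine hs.congr' ?_
    filter_upwards [eventually_gt_atTop 0] with t ht
    exact (sqrt_div_eq t ht).symm
  have h2 : Tendsto (fun t : ℝ => Real.exp (1 / (1 + t ^ 2))) atTop (nhds 1) := by
    have h0 : Tendsto (fun t : ℝ => 1 / (1 + t ^ 2)) atTop (nhds 0) := by
      have ht : Tendsto (fun t : ℝ => 1 + t ^ 2) atTop atTop :=
        tendsto_atTop_add_const_left _ _ (tendsto_pow_atTop two_ne_zero)
      simpa [Function.comp_def, one_div] using tendsto_inv_atTop_zero.comp ht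
    have := (Real.continuous_exp.tendsto 0).comp h0
    simpa [Function.comp_def] using this
  simpa using h1.mul h2

/-- For real `n > 0` let `κ n` be the unique positive root of
`x³ + x = n/(2π)`, and let `U n = (√(1+κ_n²)/κ_n) e^{2πκ_n/n}`.  Then `U` is strictly
decreasing on `(0,∞)` and `U n → 1` as `n → ∞`. -/
theorem statement_6 (κ : ℝ → ℝ)
    (hκ : ∀ n : ℝ, 0 < n → 0 < κ n ∧ (κ n) ^ 3 + κ n = n / (2 * π)) :
    let U : ℝ → ℝ := fun n => Real.sqrt (1 + (κ n) ^ 2) / κ n * Real.exp (2 * π * κ n / n)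
    StrictAntiOn U (Set.Ioi (0 : ℝ)) ∧ Tendsto U atTop (nhds 1) := by
  intro U
  have hπ : 0 < π := pi_pos
  have hU : ∀ n : ℝ, 0 < n →
      U n = Real.sqrt (1 + (κ n) ^ 2) / κ n * Real.exp (1 / (1 + (κ n) ^ 2)) := by
    intro n hn
    obtain ⟨hk, he⟩ := hκ n hn
    have hn' : n = 2 * π * ((κ n) ^ 3 + κ n) := by
      field_simp at he
      linarith
    have harg : 2 * π * κ n / n = 1 / (1 + (κ n) ^ 2) := by
      rw [div_eq_div_iff hn.ne' (by positivity : (1 + (κ n) ^ 2 : ℝ) ≠ 0)]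
      nlinarith [hn']
    simp only [U, harg]
  constructor
  · intro a ha b hb hab
    simp only [Set.mem_Ioi] at ha hb
    obtain ⟨hka, hea⟩ := hκ a ha
    obtain ⟨hkb, heb⟩ := hκ b hb
    have hkab : κ a < κ b := by
      apply cubic_strictMono.lt_iff_lt.1
      show κ a ^ 3 + κ a < κ b ^ 3 + κ b
      rw [hea, heb]
      gcongr
    rw [hU a ha, hU b hb]
    exact g_antiOn (Set.mem_Ioi.2 hka) (Set.mem_Ioi.2 hkb) hkab
  · have hκtop : Tendsto κ atTop atTop := by
      rw [tendsto_atTop]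
      intro C
      set b := max C 0 with hb
      have hb0 : 0 ≤ b := le_max_right _ _
      filter_upwards [eventually_ge_atTop (max 1 (2 * π * (b ^ 3 + b)))] with n hn
      have hn1 : (1 : ℝ) ≤ n := le_trans (le_max_left _ _) hn
      have hn2 : 2 * π * (b ^ 3 + b) ≤ n := le_trans (le_max_right _ _) hn
      have hn0 : 0 < n := by linarith
      obtain ⟨hk, he⟩ := hκ n hn0
      have hge : b ^ 3 + b ≤ (κ n) ^ 3 + κ n := by
        rw [he, le_div_iff₀ (by positivity)]
        nlinarith
      have hbk : b ≤ κ n := by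
        by_contra h
        push_neg at h
        exact absurd hge (not_le.2 (cubic_strictMono h))
      exact le_trans (le_max_left C 0) hbk
    refine (g_tendsto.comp hκtop).congr' ?_
    filter_upwards [eventually_gt_atTop 0] with n hn
    exact (hU n hn).symm
end

section
/- For real n > 0, let κ_n denote the unique positive real root of x³ + x = n/(2π), and set A(x) := √(1+x²)/x for x > 0. Define H(l) := (A(κ_{l+1})/A(κ_l))^{l} · e^{2π(κ_{l+1} − κ_l)} for integers l ≥ 1. Then H(l) ≥ 1 for every integer l ≥ 1; moreover H is strictly decreasing on the positive integers and H(l) → 1 as l → ∞. -/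
open Real Filter
open Set


section Aux
variable (κ : ℝ → ℝ)

noncomputable def phi : ℝ → ℝ := fun x => 2 * π * (x ^ 3 + x)

lemma phi_mono : StrictMono phi := by
  have h : StrictMono fun x : ℝ => x ^ 3 + x :=
    (Odd.strictMono_pow ⟨1, by norm_num⟩).add strictMono_id
  exact h.const_mul (by positivity)

lemma phi_surj : Function.Surjective phi := by
  have hc : Continuous phi := by unfold phi; continuity
  have h1 : Tendsto (fun x : ℝ => x ^ 3 + x) atTop atTop :=
    Filter.Tendsto.atTop_add_atTop (tendsto_pow_atTop (by norm_num)) tendsto_id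
  have h2 : Tendsto (fun x : ℝ => x ^ 3 + x) atBot atBot := by
    have := tendsto_neg_atTop_atBot.comp (h1.comp tendsto_neg_atBot_atTop)
    refine this.congr fun x => by simp; ring
  exact hc.surjective (h1.const_mul_atTop (by positivity))
    (h2.const_mul_atBot (by positivity))

noncomputable def ee : ℝ ≃o ℝ := StrictMono.orderIsoOfSurjective phi phi_mono phi_surj

variable (hκ : ∀ m : ℝ, 0 < m → 0 < κ m ∧ (κ m) ^ 3 + κ m = m / (2 * π))
include hκ

lemma kpos {m : ℝ} (hm : 0 < m) : 0 < κ m := (hκ m hm).1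

lemma keq {m : ℝ} (hm : 0 < m) : 2 * π * ((κ m) ^ 3 + κ m) = m := by
  rw [(hκ m hm).2]; field_simp

lemma k_eq_symm {m : ℝ} (hm : 0 < m) : κ m = ee.symm m := by
  have h : ee (κ m) = m := keq κ hκ hm
  have h2 := congrArg ee.symm h
  rw [OrderIso.symm_apply_apply] at h2
  exact h2

lemma k_lt {m₁ m₂ : ℝ} (h1 : 0 < m₁) (h : m₁ < m₂) : κ m₁ < κ m₂ := by
  have h2 : 0 < m₂ := h1.trans h
  by_contra hle
  push_neg at hle
  have := phi_mono.le_iff_le.2 hle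
  unfold phi at this
  rw [keq κ hκ h2, keq κ hκ h1] at this
  linarith

lemma k_contAt {m : ℝ} (hm : 0 < m) : ContinuousAt κ m := by
  refine (ee.symm.continuous.continuousAt).congr ?_
  filter_upwards [Ioi_mem_nhds hm] with y hy
  exact (k_eq_symm κ hκ hy).symm

lemma k_deriv {m : ℝ} (hm : 0 < m) :
    HasDerivAt κ (2 * π * (3 * (κ m) ^ 2 + 1))⁻¹ m := by
  have hphi : HasDerivAt phi (2 * π * (3 * (κ m) ^ 2 + 1)) (κ m) := by
    have h1 : HasDerivAt (fun x : ℝ => x ^ 3 + x) (3 * (κ m) ^ 2 + 1) (κ m) := by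
      exact ((hasDerivAt_pow 3 (κ m)).add (hasDerivAt_id (κ m))).congr_deriv (by norm_num)
    exact h1.const_mul (2 * π)
  refine HasDerivAt.of_local_left_inverse (k_contAt κ hκ hm) hphi (by positivity) ?_
  filter_upwards [Ioi_mem_nhds hm] with y hy
  exact keq κ hκ hy

noncomputable def BB : ℝ → ℝ := fun m => Real.log (1 + (κ m) ^ 2) / 2 - Real.log (κ m)
noncomputable def BB' : ℝ → ℝ := fun m => -(m * (3 * (κ m) ^ 2 + 1))⁻¹
noncomputable def GG : ℝ → ℝ := fun m => m * BB κ m + 2 * π * κ m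
noncomputable def FF : ℝ → ℝ := fun t => GG κ (t + 1) - GG κ t - BB κ (t + 1)

lemma B_deriv {m : ℝ} (hm : 0 < m) : HasDerivAt (BB κ) (BB' κ m) m := by
  have hk := kpos κ hκ hm
  have hd := k_deriv κ hκ hm
  have h1 : HasDerivAt (fun x => 1 + (κ x) ^ 2)
      (2 * κ m * (2 * π * (3 * (κ m) ^ 2 + 1))⁻¹) m := by
    have := (hd.pow 2).const_add 1
    simpa [mul_comm, mul_assoc, mul_left_comm] using this
  have h2 := h1.log (by positivity)
  have h3 := hd.log hk.ne'
  have h4 := (h2.div_const 2).sub h3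
  have hval : BB' κ m =
      2 * κ m * (2 * π * (3 * (κ m) ^ 2 + 1))⁻¹ / (1 + (κ m) ^ 2) / 2 -
        (2 * π * (3 * (κ m) ^ 2 + 1))⁻¹ / κ m := by
    unfold BB'
    have hπ := pi_pos
    set k := κ m with hkdef
    rw [← keq κ hκ hm, ← hkdef]
    field_simp
    ring
  rw [hval]
  exact h4

lemma G_deriv {m : ℝ} (hm : 0 < m) : HasDerivAt (GG κ) (BB κ m) m := by
  have hk := kpos κ hκ hm
  have h1 := ((hasDerivAt_id m).mul (B_deriv κ hκ hm)).add
    ((k_deriv κ hκ hm).const_mul (2 * π))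
  refine h1.congr_deriv ?_
  have hπ := pi_pos
  have hz : m * BB' κ m + 2 * π * (2 * π * (3 * (κ m) ^ 2 + 1))⁻¹ = 0 := by
    unfold BB'
    field_simp
    ring
  simp only [id_eq, one_mul]
  linarith [hz]

lemma F_deriv {t : ℝ} (ht : 0 < t) :
    HasDerivAt (FF κ) (BB κ (t + 1) - BB κ t - BB' κ (t + 1)) t := by
  have ht1 : (0 : ℝ) < t + 1 := by linarith
  have hshift : HasDerivAt (fun s : ℝ => s + 1) 1 t := (hasDerivAt_id t).add_const 1
  have h1 : HasDerivAt (fun s => GG κ (s + 1)) (BB κ (t + 1)) t := by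
    exact ((G_deriv κ hκ ht1).comp t hshift).congr_deriv (mul_one _)
  have h3 : HasDerivAt (fun s => BB κ (s + 1)) (BB' κ (t + 1)) t := by
    exact ((B_deriv κ hκ ht1).comp t hshift).congr_deriv (mul_one _)
  exact (h1.sub (G_deriv κ hκ ht)).sub h3

lemma B_eq {m : ℝ} (hm : 0 < m) :
    BB κ m = Real.log (1 + ((κ m) ^ 2)⁻¹) / 2 := by
  have hk := kpos κ hκ hm
  unfold BB
  rw [show (1 + ((κ m) ^ 2)⁻¹) = (1 + (κ m) ^ 2) / (κ m) ^ 2 by field_simp; ring,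
    Real.log_div (by positivity) (by positivity), Real.log_pow]
  push_cast
  ring

lemma B_pos {m : ℝ} (hm : 0 < m) : 0 < BB κ m := by
  have hk := kpos κ hκ hm
  rw [B_eq κ hκ hm]
  have h0 : (0 : ℝ) < ((κ m) ^ 2)⁻¹ := by positivity
  have h1 : 0 < Real.log (1 + ((κ m) ^ 2)⁻¹) := Real.log_pos (by linarith)
  linarith

lemma B_anti {m₁ m₂ : ℝ} (h1 : 0 < m₁) (h : m₁ < m₂) : BB κ m₂ < BB κ m₁ := by
  have h2 : 0 < m₂ := h1.trans h
  have hk1 := kpos κ hκ h1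
  have hk2 := kpos κ hκ h2
  have hkk := k_lt κ hκ h1 h
  rw [B_eq κ hκ h1, B_eq κ hκ h2]
  have hsq : (κ m₁) ^ 2 < (κ m₂) ^ 2 := by nlinarith
  have hinv : ((κ m₂) ^ 2)⁻¹ < ((κ m₁) ^ 2)⁻¹ := by
    apply inv_strictAnti₀ (by positivity) hsq
  have := Real.log_lt_log (by positivity) (by linarith : 1 + ((κ m₂) ^ 2)⁻¹ < 1 + ((κ m₁) ^ 2)⁻¹)
  linarith

lemma B'_mono {m₁ m₂ : ℝ} (h1 : 0 < m₁) (h : m₁ < m₂) : BB' κ m₁ < BB' κ m₂ := by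
  have h2 : 0 < m₂ := h1.trans h
  have hk1 := kpos κ hκ h1
  have hkk := k_lt κ hκ h1 h
  unfold BB'
  have ha2 : (κ m₁) ^ 2 < (κ m₂) ^ 2 := by nlinarith
  have hP : m₁ * (3 * (κ m₁) ^ 2 + 1) < m₂ * (3 * (κ m₂) ^ 2 + 1) :=
    mul_lt_mul h (by nlinarith) (by positivity) h2.le
  have := inv_strictAnti₀ (by positivity : (0:ℝ) < m₁ * (3 * (κ m₁) ^ 2 + 1)) hP
  linarith

lemma slope_G {a : ℝ} (ha : 0 < a) :
    ∃ c ∈ Ioo a (a + 1), GG κ (a + 1) - GG κ a = BB κ c := by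
  obtain ⟨c, hc, h⟩ := exists_hasDerivAt_eq_slope (GG κ) (BB κ) (by linarith : a < a + 1)
    (fun x hx => (G_deriv κ hκ (by linarith [hx.1] : 0 < x)).continuousAt.continuousWithinAt)
    (fun x hx => G_deriv κ hκ (by linarith [hx.1]))
  exact ⟨c, hc, by rw [h]; simp⟩

lemma slope_B {a : ℝ} (ha : 0 < a) :
    ∃ c ∈ Ioo a (a + 1), BB κ (a + 1) - BB κ a = BB' κ c := by
  obtain ⟨c, hc, h⟩ := exists_hasDerivAt_eq_slope (BB κ) (BB' κ) (by linarith : a < a + 1)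
    (fun x hx => (B_deriv κ hκ (by linarith [hx.1] : 0 < x)).continuousAt.continuousWithinAt)
    (fun x hx => B_deriv κ hκ (by linarith [hx.1]))
  exact ⟨c, hc, by rw [h]; simp⟩

lemma slope_F {a : ℝ} (ha : 0 < a) :
    ∃ c ∈ Ioo a (a + 1),
      FF κ (a + 1) - FF κ a = BB κ (c + 1) - BB κ c - BB' κ (c + 1) := by
  obtain ⟨c, hc, h⟩ := exists_hasDerivAt_eq_slope (FF κ)
    (fun t => BB κ (t + 1) - BB κ t - BB' κ (t + 1)) (by linarith : a < a + 1)
    (fun x hx => (F_deriv κ hκ (by linarith [hx.1] : 0 < x)).continuousAt.continuousWithinAt)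
    (fun x hx => F_deriv κ hκ (by linarith [hx.1]))
  exact ⟨c, hc, by rw [h]; simp⟩

lemma F_nonneg_le {a : ℝ} (ha : 0 < a) : 0 ≤ FF κ a ∧ FF κ a ≤ BB κ a := by
  obtain ⟨c, hc, hG⟩ := slope_G κ hκ ha
  have hFa : FF κ a = BB κ c - BB κ (a + 1) := by unfold FF; rw [hG]
  have h1 : BB κ (a + 1) < BB κ c := B_anti κ hκ (ha.trans hc.1) hc.2
  have h2 : BB κ c < BB κ a := B_anti κ hκ ha hc.1
  have h3 : 0 < BB κ (a + 1) := B_pos κ hκ (by linarith)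
  constructor <;> [linarith; linarith]

lemma F_strict {a : ℝ} (ha : 0 < a) : FF κ (a + 1) < FF κ a := by
  obtain ⟨c, hc, hF⟩ := slope_F κ hκ ha
  have hc0 : 0 < c := ha.trans hc.1
  obtain ⟨z, hz, hB⟩ := slope_B κ hκ hc0
  have := B'_mono κ hκ (hc0.trans hz.1) hz.2
  have : FF κ (a + 1) - FF κ a < 0 := by rw [hF, hB]; linarith
  linarith

lemma k_tendsto : Tendsto κ atTop atTop := by
  have hsym : Tendsto (fun m => (ee.symm m : ℝ)) atTop atTop :=
    tendsto_atTop_atTop_of_monotone ee.symm.monotone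
      (fun b => ⟨ee b, (ee.symm_apply_apply b).ge⟩)
  refine hsym.congr' ?_
  filter_upwards [eventually_gt_atTop 0] with m hm
  exact (k_eq_symm κ hκ hm).symm

lemma B_tendsto : Tendsto (BB κ) atTop (nhds 0) := by
  have hk := k_tendsto κ hκ
  have h2 : Tendsto (fun m => ((κ m) ^ 2)⁻¹) atTop (nhds 0) :=
    ((tendsto_pow_atTop (two_ne_zero)).comp hk).inv_tendsto_atTop
  have h3 : Tendsto (fun m => 1 + ((κ m) ^ 2)⁻¹) atTop (nhds 1) := by
    simpa using tendsto_const_nhds.add h2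
  have h4 : Tendsto (fun m => Real.log (1 + ((κ m) ^ 2)⁻¹) / 2) atTop (nhds 0) := by
    have := (Real.continuousAt_log one_ne_zero).tendsto.comp h3
    simpa using this.div_const 2
  refine h4.congr' ?_
  filter_upwards [eventually_gt_atTop 0] with m hm
  exact (B_eq κ hκ hm).symm

end Aux


/-- With `κ m` the unique positive root of `x³ + x = m/(2π)` and
`A x = √(1+x²)/x`, define `H l = (A(κ_{l+1})/A(κ_l))^l · e^{2π(κ_{l+1} - κ_l)}`.
Then `H l ≥ 1` for every integer `l ≥ 1`, `H` is strictly decreasing on the positive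
integers, and `H l → 1` as `l → ∞`. -/
theorem statement_8 (κ : ℝ → ℝ)
    (hκ : ∀ m : ℝ, 0 < m → 0 < κ m ∧ (κ m) ^ 3 + κ m = m / (2 * π)) :
    let A : ℝ → ℝ := fun x => Real.sqrt (1 + x ^ 2) / x
    let H : ℕ → ℝ := fun l =>
      (A (κ ((l : ℝ) + 1)) / A (κ (l : ℝ))) ^ l *
        Real.exp (2 * π * (κ ((l : ℝ) + 1) - κ (l : ℝ)))
    (∀ l : ℕ, 1 ≤ l → 1 ≤ H l) ∧
    (∀ l : ℕ, 1 ≤ l → H (l + 1) < H l) ∧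
    Tendsto H atTop (nhds 1) := by
  intro A H
  have hπ := pi_pos
  have expB : ∀ m : ℝ, 0 < m → Real.exp (BB κ m) = A (κ m) := by
    intro m hm
    have hk := kpos κ hκ hm
    show Real.exp (Real.log (1 + (κ m) ^ 2) / 2 - Real.log (κ m)) =
      Real.sqrt (1 + (κ m) ^ 2) / κ m
    rw [Real.exp_sub, Real.exp_log hk]
    congr 1
    rw [Real.sqrt_eq_rpow, Real.rpow_def_of_pos (by positivity)]
    congr 1
    ring
  have hHF : ∀ l : ℕ, 1 ≤ l → H l = Real.exp (FF κ (l : ℝ)) := by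
    intro l hl
    have hl0 : (0:ℝ) < (l : ℝ) := by exact_mod_cast Nat.lt_of_lt_of_le one_pos hl
    have hl1 : (0:ℝ) < (l : ℝ) + 1 := by linarith
    have hFeq : FF κ (l : ℝ) =
        (l : ℝ) * (BB κ ((l : ℝ) + 1) - BB κ (l : ℝ)) +
          2 * π * (κ ((l : ℝ) + 1) - κ (l : ℝ)) := by
      unfold FF GG; ring
    show (A (κ ((l : ℝ) + 1)) / A (κ (l : ℝ))) ^ l *
        Real.exp (2 * π * (κ ((l : ℝ) + 1) - κ (l : ℝ))) = Real.exp (FF κ (l : ℝ))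
    rw [hFeq, Real.exp_add, Real.exp_nat_mul, Real.exp_sub, expB _ hl1, expB _ hl0]
  refine ⟨?_, ?_, ?_⟩
  · intro l hl
    rw [hHF l hl]
    have hl0 : (0:ℝ) < (l : ℝ) := by exact_mod_cast Nat.lt_of_lt_of_le one_pos hl
    have h := (F_nonneg_le κ hκ hl0).1
    calc (1:ℝ) = Real.exp 0 := Real.exp_zero.symm
      _ ≤ Real.exp (FF κ (l : ℝ)) := Real.exp_le_exp.2 h
  · intro l hl
    rw [hHF l hl, hHF (l + 1) (by omega)]
    have hl0 : (0:ℝ) < (l : ℝ) := by exact_mod_cast Nat.lt_of_lt_of_le one_pos hl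
    have h := F_strict κ hκ hl0
    apply Real.exp_lt_exp.2
    push_cast
    exact h
  · have hB := (B_tendsto κ hκ).comp tendsto_natCast_atTop_atTop
    have hF : Tendsto (fun l : ℕ => FF κ (l : ℝ)) atTop (nhds 0) := by
      refine tendsto_of_tendsto_of_tendsto_of_le_of_le' tendsto_const_nhds hB ?_ ?_
      · filter_upwards [eventually_ge_atTop 1] with l hl
        exact (F_nonneg_le κ hκ (by exact_mod_cast Nat.lt_of_lt_of_le one_pos hl)).1
      · filter_upwards [eventually_ge_atTop 1] with l hl
        exact (F_nonneg_le κ hκ (by exact_mod_cast Nat.lt_of_lt_of_le one_pos hl)).2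
    have h := (Real.continuous_exp.tendsto 0).comp hF
    rw [Real.exp_zero] at h
    refine h.congr' ?_
    filter_upwards [eventually_ge_atTop 1] with l hl
    exact (hHF l hl).symm
end

section
/- Let n ≥ 2 be an integer and let c_0 ≥ c_1 ≥ … ≥ c_{n−1} > 0 with c_0 = 1, and let G_j := (∏_{i=0}^{j−1} c_i)^{1/j} for 1 ≤ j ≤ n. For real m > 0 let κ_m denote the unique positive real root of x³ + x = m/(2π) and U_m := (√(1+κ_m²)/κ_m)·e^{2πκ_m/m}. Suppose ℓ ∈ {1,…,n−1} satisfies U_ℓ/G_ℓ ≥ U_{ℓ+1}/G_{ℓ+1} (in particular this holds when ℓ minimizes i ↦ U_{i+1}/G_{i+1} over i ∈ {0,…,n−1} and ℓ ≥ 1). Then c_ℓ ≥ e^{−2πκ_{ℓ+1}/ℓ} · G_ℓ, or equivalently c_ℓ ≥ e^{−2πκ_{ℓ+1}/(ℓ+1)} · G_{ℓ+1}. -/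
open Real

lemma key_log (a b : ℝ) (ha : 0 < a) (hab : a ≤ b) :
    (Real.log (1 + a ^ 2) / 2 - Real.log a) - (Real.log (1 + b ^ 2) / 2 - Real.log b)
      ≤ (b - a) / (a * (1 + a ^ 2)) := by
  set D := a * (1 + a ^ 2) with hD
  have hD0 : 0 < D := by positivity
  set F : ℝ → ℝ := fun x => Real.log (1 + x ^ 2) / 2 - Real.log x + x / D with hFdef
  have hderiv : ∀ x : ℝ, 0 < x →
      HasDerivAt F (x / (1 + x ^ 2) - 1 / x + 1 / D) x := by
    intro x hx0
    have h1 : HasDerivAt (fun y : ℝ => 1 + y ^ 2) (2 * x) x := by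
      simpa using (hasDerivAt_pow 2 x).const_add 1
    have h2 : HasDerivAt (fun y : ℝ => Real.log (1 + y ^ 2)) (2 * x / (1 + x ^ 2)) x :=
      h1.log (by positivity)
    have h3 : HasDerivAt Real.log x⁻¹ x := Real.hasDerivAt_log hx0.ne'
    have h4 : HasDerivAt (fun y : ℝ => y / D) (1 / D) x := by
      simpa using (hasDerivAt_id x).div_const D
    have := ((h2.div_const 2).sub h3).add h4
    refine HasDerivAt.congr_deriv this ?_
    ring
  have hmono : MonotoneOn F (Set.Ici a) := by
    apply monotoneOn_of_deriv_nonneg (convex_Ici a)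
    · intro x hx
      exact ((hderiv x (lt_of_lt_of_le ha hx)).differentiableAt).continuousAt.continuousWithinAt
    · intro x hx
      rw [interior_Ici] at hx
      exact ((hderiv x (lt_trans ha hx)).differentiableAt).differentiableWithinAt
    · intro x hx
      rw [interior_Ici] at hx
      have hx0 : 0 < x := lt_trans ha hx
      rw [(hderiv x hx0).deriv]
      have h5 : 1 / x - x / (1 + x ^ 2) = 1 / (x * (1 + x ^ 2)) := by
        field_simp; ring
      have h6 : (1 : ℝ) / (x * (1 + x ^ 2)) ≤ 1 / D := by
        apply one_div_le_one_div_of_le hD0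
        rw [hD]
        have hax : a ≤ x := le_of_lt hx
        have h7 : 0 ≤ (x - a) * (x ^ 2 + a * x + a ^ 2 + 1) :=
          mul_nonneg (by linarith) (by nlinarith [mul_pos hx0 ha])
        nlinarith [h7]
      linarith [h5 ▸ h6]
  have hFab : F a ≤ F b := hmono (Set.self_mem_Ici) hab hab
  have hF' : Real.log (1 + a ^ 2) / 2 - Real.log a + a / D ≤
      Real.log (1 + b ^ 2) / 2 - Real.log b + b / D := hFab
  have hsub : b / D - a / D = (b - a) / D := (sub_div b a D).symm
  linarith

lemma root_le (a b t : ℝ) (ha : 0 < a) (hb : 0 < b)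
    (hacube : a ^ 3 + a = t / (2 * π)) (hbcube : b ^ 3 + b = (t + 1) / (2 * π)) : a ≤ b := by
  have hπ : 0 < π := Real.pi_pos
  have h : a ^ 3 + a < b ^ 3 + b := by
    rw [hacube, hbcube]
    exact (div_lt_div_iff_of_pos_right (by positivity)).mpr (by linarith)
  by_contra hc
  push_neg at hc
  nlinarith [sq_nonneg (a + b), sq_nonneg (a - b), mul_pos ha hb]

set_option maxHeartbeats 1000000 in
/-- Let `n ≥ 2`, speeds `c_0 ≥ c_1 ≥ … ≥ c_{n-1} > 0` with `c_0 = 1`, and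
geometric means `G j = (∏_{i<j} c_i)^{1/j}`.  With `κ m` the unique positive root of
`x³ + x = m/(2π)` and `U m = (√(1+κ_m²)/κ_m) e^{2πκ_m/m}`, if `ℓ ∈ {1,…,n-1}` satisfies
`U_ℓ/G_ℓ ≥ U_{ℓ+1}/G_{ℓ+1}`, then `c_ℓ ≥ e^{-2πκ_{ℓ+1}/ℓ} G_ℓ`, or equivalently
`c_ℓ ≥ e^{-2πκ_{ℓ+1}/(ℓ+1)} G_{ℓ+1}`. -/
theorem statement_9 (n : ℕ) (hn : 2 ≤ n) (c : ℕ → ℝ)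
    (hpos : ∀ i < n, 0 < c i)
    (hmono : ∀ i, i + 1 < n → c (i + 1) ≤ c i)
    (hc0 : c 0 = 1)
    (κ U : ℝ → ℝ)
    (hκ : ∀ m : ℝ, 0 < m → 0 < κ m ∧ (κ m) ^ 3 + κ m = m / (2 * π))
    (hU : ∀ m : ℝ, 0 < m →
      U m = Real.sqrt (1 + (κ m) ^ 2) / κ m * Real.exp (2 * π * κ m / m))
    (G : ℕ → ℝ)
    (hG : ∀ j : ℕ, 1 ≤ j → j ≤ n →
      G j = (∏ i ∈ Finset.range j, c i) ^ ((1 : ℝ) / j))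
    (ℓ : ℕ) (hℓ1 : 1 ≤ ℓ) (hℓn : ℓ < n)
    (hmin : U ((ℓ : ℝ) + 1) / G (ℓ + 1) ≤ U (ℓ : ℝ) / G ℓ) :
    Real.exp (-(2 * π * κ ((ℓ : ℝ) + 1)) / ℓ) * G ℓ ≤ c ℓ ∧
    Real.exp (-(2 * π * κ ((ℓ : ℝ) + 1)) / ((ℓ : ℝ) + 1)) * G (ℓ + 1) ≤ c ℓ := by
  have hπ : 0 < π := Real.pi_pos
  set t : ℝ := (ℓ : ℝ) with ht
  have ht1 : (1 : ℝ) ≤ t := by rw [ht]; exact_mod_cast hℓ1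
  have ht0 : 0 < t := by linarith
  have ht10 : 0 < t + 1 := by linarith
  obtain ⟨ha, hacube⟩ := hκ t ht0
  obtain ⟨hb, hbcube⟩ := hκ (t + 1) ht10
  set a : ℝ := κ t with hadef
  set b : ℝ := κ (t + 1) with hbdef
  have hab : a ≤ b := root_le a b t ha hb hacube hbcube
  -- products
  have hP : 0 < ∏ i ∈ Finset.range ℓ, c i := by
    apply Finset.prod_pos
    intro i hi
    exact hpos i (lt_of_lt_of_le (Finset.mem_range.mp hi) (le_of_lt hℓn))
  set P : ℝ := ∏ i ∈ Finset.range ℓ, c i with hPdef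
  have hcl : 0 < c ℓ := hpos ℓ hℓn
  have hPsucc : ∏ i ∈ Finset.range (ℓ + 1), c i = P * c ℓ := Finset.prod_range_succ c ℓ
  -- G values
  have hGl : G ℓ = P ^ ((1 : ℝ) / t) := by rw [hG ℓ hℓ1 (le_of_lt hℓn)]
  have hGl1 : G (ℓ + 1) = (P * c ℓ) ^ ((1 : ℝ) / (t + 1)) := by
    rw [hG (ℓ + 1) (by omega) (by omega), hPsucc]
    push_cast
    ring_nf
    rfl
  have hGlpos : 0 < G ℓ := by rw [hGl]; positivity
  have hGl1pos : 0 < G (ℓ + 1) := by rw [hGl1]; positivity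
  -- logs of G
  set L : ℝ := Real.log P with hLdef
  set M : ℝ := Real.log (P * c ℓ) with hMdef
  have hM : M = L + Real.log (c ℓ) := Real.log_mul hP.ne' hcl.ne'
  have hlogGl : Real.log (G ℓ) = L / t := by
    rw [hGl, Real.log_rpow hP]; ring
  have hlogGl1 : Real.log (G (ℓ + 1)) = M / (t + 1) := by
    rw [hGl1, Real.log_rpow (by positivity)]; ring
  -- logs of U
  have hUl : U t = Real.sqrt (1 + a ^ 2) / a * Real.exp (2 * π * a / t) := hU t ht0
  have hUl1 : U (t + 1) = Real.sqrt (1 + b ^ 2) / b * Real.exp (2 * π * b / (t + 1)) :=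
    hU (t + 1) ht10
  have hUlpos : 0 < U t := by rw [hUl]; positivity
  have hUl1pos : 0 < U (t + 1) := by rw [hUl1]; positivity
  have hlogU : ∀ x m : ℝ, 0 < x → 0 < m →
      Real.log (Real.sqrt (1 + x ^ 2) / x * Real.exp (2 * π * x / m)) =
        Real.log (1 + x ^ 2) / 2 - Real.log x + 2 * π * x / m := by
    intro x m hx hm
    rw [Real.log_mul (by positivity) (Real.exp_ne_zero _), Real.log_exp,
      Real.log_div (by positivity) hx.ne', Real.log_sqrt (by positivity)]
  have hlogUl : Real.log (U t) = Real.log (1 + a ^ 2) / 2 - Real.log a + 2 * π * a / t := by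
    rw [hUl]; exact hlogU a t ha ht0
  have hlogUl1 : Real.log (U (t + 1)) =
      Real.log (1 + b ^ 2) / 2 - Real.log b + 2 * π * b / (t + 1) := by
    rw [hUl1]; exact hlogU b (t + 1) hb ht10
  -- hypothesis in log form
  have hmin' : U (t + 1) * G ℓ ≤ U t * G (ℓ + 1) :=
    (div_le_div_iff₀ hGl1pos hGlpos).mp hmin
  have hlogmin : Real.log (U (t + 1)) + Real.log (G ℓ) ≤
      Real.log (U t) + Real.log (G (ℓ + 1)) := by
    have h1 : Real.log (U (t + 1) * G ℓ) ≤ Real.log (U t * G (ℓ + 1)) :=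
      Real.log_le_log (by positivity) hmin'
    rwa [Real.log_mul hUl1pos.ne' hGlpos.ne', Real.log_mul hUlpos.ne' hGl1pos.ne'] at h1
  -- key analytic inequality
  have hkey := key_log a b ha hab
  have haD : a * (1 + a ^ 2) = t / (2 * π) := by
    have : a * (1 + a ^ 2) = a ^ 3 + a := by ring
    rw [this, hacube]
  have hkey2 : (Real.log (1 + a ^ 2) / 2 - Real.log a) -
      (Real.log (1 + b ^ 2) / 2 - Real.log b) ≤ 2 * π * (b - a) / t := by
    rw [haD] at hkey
    have heq : (b - a) / (t / (2 * π)) = 2 * π * (b - a) / t := by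
      field_simp
    linarith [heq ▸ hkey]
  -- combine
  have hsplit : 2 * π * (b - a) / t = 2 * π * b / t - 2 * π * a / t := by ring
  have hcomb : L / t - M / (t + 1) ≤ 2 * π * b / t - 2 * π * b / (t + 1) := by
    rw [hlogUl1, hlogUl, hlogGl, hlogGl1] at hlogmin
    linarith [hsplit ▸ hkey2]
  have hmain : (t + 1) * L - t * M ≤ 2 * π * b := by
    have e1 : L / t - M / (t + 1) = ((t + 1) * L - t * M) / (t * (t + 1)) := by
      field_simp
    have e2 : 2 * π * b / t - 2 * π * b / (t + 1) = (2 * π * b) / (t * (t + 1)) := by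
      field_simp; ring
    have h7 : ((t + 1) * L - t * M) / (t * (t + 1)) ≤ (2 * π * b) / (t * (t + 1)) := by
      rw [← e1, ← e2]; exact hcomb
    exact (div_le_div_iff_of_pos_right (by positivity)).mp h7
  have hlogcl : Real.log (c ℓ) = M - L := by rw [hM]; ring
  constructor
  · rw [← Real.log_le_log_iff (mul_pos (Real.exp_pos _) hGlpos) hcl,
      Real.log_mul (Real.exp_ne_zero _) hGlpos.ne', Real.log_exp, hlogGl, hlogcl]
    rw [← add_div, div_le_iff₀ ht0]
    ring_nf
    ring_nf at hmain
    linarith [hmain]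
  · rw [← Real.log_le_log_iff (mul_pos (Real.exp_pos _) hGl1pos) hcl,
      Real.log_mul (Real.exp_ne_zero _) hGl1pos.ne', Real.log_exp, hlogGl1, hlogcl]
    rw [← add_div, div_le_iff₀ ht10]
    ring_nf
    ring_nf at hmain
    linarith [hmain]
end

section
/- Let n ≥ 1 be an integer, k > 0 a real, and c_0, c_1, …, c_n positive reals with c_0 = c_n = 1. Let G_j := (∏_{i=0}^{j−1} c_i)^{1/j} for 1 ≤ j ≤ n and G_0 := 1, and assume min_{0 ≤ i ≤ n} c_i ≥ e^{−2πk/n}·G_n. Define φ_j := 2π(n−j)/n − (j/k)·ln(G_j/G_n) for j ∈ {0,…,n}. Then φ_0 = 2π, φ_n = 0, φ_j ≥ φ_{j+1} for every j ∈ {0,…,n−1}, and c_j·e^{−kφ_j} ≤ c_{j+1}·e^{−kφ_{j+1}} for every j ∈ {0,…,n−1}. -/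
open Real

/-- Let `n ≥ 1`, `k > 0`, positive speeds `c_0, …, c_n` with
`c_0 = c_n = 1`, geometric means `G j` (with `G 0 = 1`), and suppose every speed is at
least `e^{-2πk/n} G_n`.  Define `φ_j = 2π(n-j)/n - (j/k) ln(G_j/G_n)`.  Then `φ_0 = 2π`,
`φ_n = 0`, the `φ_j` are non-increasing, and `c_j e^{-kφ_j} ≤ c_{j+1} e^{-kφ_{j+1}}`
for every `j < n`. -/
theorem statement_11 (n : ℕ) (hn : 1 ≤ n) (k : ℝ) (hk : 0 < k)
    (c : ℕ → ℝ) (hpos : ∀ i ≤ n, 0 < c i) (hc0 : c 0 = 1) (hcn : c n = 1)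
    (G : ℕ → ℝ) (hG0 : G 0 = 1)
    (hG : ∀ j : ℕ, 1 ≤ j → j ≤ n →
      G j = (∏ i ∈ Finset.range j, c i) ^ ((1 : ℝ) / j))
    (hmin : ∀ i ≤ n, Real.exp (-(2 * π * k) / n) * G n ≤ c i) :
    let φ : ℕ → ℝ := fun j =>
      2 * π * ((n : ℝ) - j) / n - ((j : ℝ) / k) * Real.log (G j / G n)
    φ 0 = 2 * π ∧ φ n = 0 ∧
    (∀ j < n, φ (j + 1) ≤ φ j) ∧
    (∀ j < n, c j * Real.exp (-(k * φ j)) ≤ c (j + 1) * Real.exp (-(k * φ (j + 1)))) := by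
  intro φ
  have hπ := Real.pi_pos
  have hn' : (0:ℝ) < n := by exact_mod_cast hn
  have hne : (n:ℝ) ≠ 0 := ne_of_gt hn'
  set P : ℕ → ℝ := fun j => ∏ i ∈ Finset.range j, c i with hPdef
  have hPpos : ∀ j ≤ n, 0 < P j := by
    intro j hj
    exact Finset.prod_pos fun i hi =>
      hpos i (le_of_lt (lt_of_lt_of_le (Finset.mem_range.1 hi) hj))
  have hGpos : ∀ j ≤ n, 0 < G j := by
    intro j hj
    rcases Nat.eq_zero_or_pos j with h0 | h1
    · rw [h0, hG0]; norm_num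
    · rw [hG j h1 hj]; exact Real.rpow_pos_of_pos (hPpos j hj) _
  have hGnpos : 0 < G n := hGpos n le_rfl
  have hlog : ∀ j ≤ n, (j:ℝ) * Real.log (G j) = Real.log (P j) := by
    intro j hj
    rcases Nat.eq_zero_or_pos j with h0 | h1
    · simp [h0, hG0, hPdef]
    · have hj0 : (j:ℝ) ≠ 0 := by exact_mod_cast Nat.pos_iff_ne_zero.mp h1
      rw [hG j h1 hj, Real.log_rpow (hPpos j hj)]
      field_simp
  have hφ : ∀ j ≤ n, φ j
      = 2*π*((n:ℝ) - j)/n - (1/k) * (Real.log (P j) - (j:ℝ) * Real.log (G n)) := by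
    intro j hj
    show 2*π*((n:ℝ) - j)/n - ((j:ℝ)/k) * Real.log (G j / G n) = _
    rw [Real.log_div (ne_of_gt (hGpos j hj)) (ne_of_gt hGnpos), ← hlog j hj]
    ring
  have hminlog : ∀ i ≤ n, Real.log (G n) - 2*π*k/n ≤ Real.log (c i) := by
    intro i hi
    have h := hmin i hi
    have hl : Real.log (Real.exp (-(2 * π * k) / n) * G n) ≤ Real.log (c i) :=
      Real.log_le_log (mul_pos (Real.exp_pos _) hGnpos) h
    rw [Real.log_mul (Real.exp_ne_zero _) (ne_of_gt hGnpos), Real.log_exp] at hl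
    have : -(2 * π * k) / n = -(2*π*k/n) := by ring
    rw [this] at hl
    linarith
  have hkey : ∀ j < n, k * φ j - k * φ (j+1)
      = 2*π*k/n + Real.log (c j) - Real.log (G n) := by
    intro j hj
    have hj1 : j + 1 ≤ n := hj
    have hjn : j ≤ n := le_of_lt hj
    have hPs : Real.log (P (j+1)) = Real.log (P j) + Real.log (c j) := by
      have h1 : P (j+1) = P j * c j := Finset.prod_range_succ _ _
      rw [h1, Real.log_mul (ne_of_gt (hPpos j hjn)) (ne_of_gt (hpos j hjn))]
    rw [hφ j hjn, hφ (j+1) hj1, hPs]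
    push_cast
    field_simp
    ring
  have h0 : φ 0 = 2 * π := by
    rw [hφ 0 (Nat.zero_le n)]
    norm_num [hPdef]
    field_simp
  have hN : φ n = 0 := by
    show 2 * π * ((n : ℝ) - n) / n - ((n:ℝ) / k) * Real.log (G n / G n) = 0
    rw [div_self (ne_of_gt hGnpos), Real.log_one]
    simp
  clear_value φ
  have hmono : ∀ j < n, φ (j + 1) ≤ φ j := by
    intro j hj
    have h1 := hkey j hj
    have h2 := hminlog j (le_of_lt hj)
    have h3 : k * φ (j+1) ≤ k * φ j := by linarith
    exact (mul_le_mul_iff_of_pos_left hk).mp h3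
  refine ⟨h0, hN, hmono, ?_⟩
  intro j hj
  have h1 := hkey j hj
  have h2 := hminlog (j+1) hj
  have hcj := hpos j (le_of_lt hj)
  have hcj1 := hpos (j+1) hj
  rw [← Real.exp_log hcj, ← Real.exp_log hcj1, ← Real.exp_add, ← Real.exp_add,
    Real.exp_le_exp]
  linarith
end

section
/- Let φ ∈ (0,π). For λ > 1 define k_λ := (ln λ)/(2π) + ((λ−1)/√(2λ(1−cos φ)))·(1 − φ/(2π)) and p(λ) := (√(λ² − 2λ cos φ + 1)/(λ−1))·e^{2πk_λ}. Let κ₁ be the unique positive real root of x³ + x = 1/(2π) and U₁ := (√(1+κ₁²)/κ₁)·e^{2πκ₁}. Then there exists λ > 1 with p(λ) < U₁; i.e., the minimum of p over (1,∞) is strictly smaller than U₁. -/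
open Real

lemma aux_two_log_le {u : ℝ} (hu : 1 ≤ u) : 2 * Real.log u ≤ u - u⁻¹ := by
  have hderiv : ∀ x : ℝ, 0 < x →
      HasDerivAt (fun y : ℝ => y - y⁻¹ - 2 * Real.log y) (1 - -(x ^ 2)⁻¹ - 2 * x⁻¹) x := by
    intro x hx
    exact ((hasDerivAt_id x).sub (hasDerivAt_inv hx.ne')).sub
      ((Real.hasDerivAt_log hx.ne').const_mul 2)
  have hne : ∀ x ∈ Set.Ici (1:ℝ), x ≠ 0 := by
    intro x hx
    have : (1:ℝ) ≤ x := hx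
    linarith
  have hmono : MonotoneOn (fun x : ℝ => x - x⁻¹ - 2 * Real.log x) (Set.Ici 1) := by
    apply monotoneOn_of_deriv_nonneg (convex_Ici 1)
    · apply ContinuousOn.sub
      · exact continuousOn_id.sub (continuousOn_id.inv₀ hne)
      · exact continuousOn_const.mul (Real.continuousOn_log.mono (by
          intro x hx
          simp only [Set.mem_compl_iff, Set.mem_singleton_iff]
          exact hne x hx))
    · intro x hx
      rw [interior_Ici] at hx
      have hx0 : (0:ℝ) < x := lt_trans one_pos hx
      exact ((hderiv x hx0).differentiableAt).differentiableWithinAt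
    · intro x hx
      rw [interior_Ici] at hx
      have hx0 : (0:ℝ) < x := lt_trans one_pos hx
      rw [(hderiv x hx0).deriv]
      have : 1 - -(x ^ 2)⁻¹ - 2 * x⁻¹ = (x⁻¹ - 1) ^ 2 := by
        field_simp
        ring
      rw [this]
      positivity
  have h1 : (1:ℝ) ∈ Set.Ici (1:ℝ) := Set.mem_Ici.mpr le_rfl
  have hu' : u ∈ Set.Ici (1:ℝ) := Set.mem_Ici.mpr hu
  have := hmono h1 hu' hu
  simp [Real.log_one] at this
  linarith

set_option maxHeartbeats 1600000 in
/-- For `φ ∈ (0,π)`, with `k_λ` and `p` as for the Shortcut Spiral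
Trajectory, and `U₁ = (√(1+κ₁²)/κ₁) e^{2πκ₁}` where `κ₁` is the unique positive root
of `x³ + x = 1/(2π)`, there exists `λ > 1` with `p λ < U₁`. -/
theorem statement_17 (φ : ℝ) (hφ : φ ∈ Set.Ioo 0 π)
    (κ₁ : ℝ) (hκ₁pos : 0 < κ₁) (hκ₁ : κ₁ ^ 3 + κ₁ = 1 / (2 * π)) :
    let kl : ℝ → ℝ := fun lam => Real.log lam / (2 * π) +
      (lam - 1) / Real.sqrt (2 * lam * (1 - Real.cos φ)) * (1 - φ / (2 * π))
    let p : ℝ → ℝ := fun lam =>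
      Real.sqrt (lam ^ 2 - 2 * lam * Real.cos φ + 1) / (lam - 1) *
        Real.exp (2 * π * kl lam)
    let U₁ : ℝ := Real.sqrt (1 + κ₁ ^ 2) / κ₁ * Real.exp (2 * π * κ₁)
    ∃ lam : ℝ, 1 < lam ∧ p lam < U₁ := by
  obtain ⟨hφ0, hφπ⟩ := hφ
  intro kl p U₁
  have hπ := Real.pi_pos
  obtain ⟨c, hc_def⟩ : ∃ x : ℝ, x = 2 * Real.sin (φ / 2) := ⟨_, rfl⟩
  have hsin : Real.sin (φ / 2) ^ 2 = (1 - Real.cos φ) / 2 := by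
    have h := Real.sin_sq_eq_half_sub (φ / 2)
    rw [show 2 * (φ / 2) = φ by ring] at h
    linarith
  have hsinpos : 0 < Real.sin (φ / 2) :=
    Real.sin_pos_of_pos_of_lt_pi (by linarith) (by linarith)
  have hc0 : 0 < c := by rw [hc_def]; positivity
  have hcφ : c < φ := by
    have := Real.sin_lt (show 0 < φ / 2 by linarith)
    rw [hc_def]; linarith
  have hD : 0 < 2 * π - φ + c := by linarith
  obtain ⟨t, ht_def⟩ : ∃ x : ℝ, x = 2 * π * κ₁ / (2 * π - φ + c) := ⟨_, rfl⟩
  have ht0 : 0 < t := by rw [ht_def]; exact div_pos (by positivity) hD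
  have htκ : κ₁ < t := by
    rw [ht_def, lt_div_iff₀ hD]; nlinarith
  have htD : t * (2 * π - φ + c) = 2 * π * κ₁ := by
    rw [ht_def]; exact div_mul_cancel₀ _ hD.ne'
  obtain ⟨s, hs_def⟩ : ∃ x : ℝ, x = t * c := ⟨_, rfl⟩
  have hs0 : 0 < s := by rw [hs_def]; exact mul_pos ht0 hc0
  obtain ⟨r, hr_def⟩ : ∃ x : ℝ, x = Real.sqrt (s ^ 2 + 4) := ⟨_, rfl⟩
  have hr2 : r ^ 2 = s ^ 2 + 4 := by rw [hr_def]; exact Real.sq_sqrt (by positivity)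
  have hr2' : 2 ≤ r := by
    rw [hr_def, show (2:ℝ) = Real.sqrt 4 by
      rw [show (4:ℝ) = 2 ^ 2 by norm_num, Real.sqrt_sq]; norm_num]
    exact Real.sqrt_le_sqrt (by nlinarith)
  obtain ⟨u, hu_def⟩ : ∃ x : ℝ, x = (s + r) / 2 := ⟨_, rfl⟩
  have hu1 : 1 < u := by rw [hu_def]; linarith
  have hu0 : 0 < u := by linarith
  have hu2 : u ^ 2 = s * u + 1 := by rw [hu_def]; linear_combination hr2 / 4
  have hlam1 : (1:ℝ) < u ^ 2 := by nlinarith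
  refine ⟨u ^ 2, hlam1, ?_⟩
  have hc2 : c ^ 2 = 2 * (1 - Real.cos φ) := by rw [hc_def]; linear_combination 4 * hsin
  obtain ⟨q, hq_def⟩ : ∃ x : ℝ, x = Real.sqrt (s ^ 2 + c ^ 2) := ⟨_, rfl⟩
  have hq2 : q ^ 2 = s ^ 2 + c ^ 2 := by rw [hq_def]; exact Real.sq_sqrt (by positivity)
  have hq0 : 0 < q := by rw [hq_def]; exact Real.sqrt_pos.mpr (by positivity)
  have e1 : Real.sqrt ((u ^ 2) ^ 2 - 2 * u ^ 2 * Real.cos φ + 1) = u * q := by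
    rw [show (u ^ 2) ^ 2 - 2 * u ^ 2 * Real.cos φ + 1 = (u * q) ^ 2 by
      linear_combination (-(u ^ 2)) * hq2 + (-(u ^ 2)) * hc2 + (u ^ 2 + s * u - 1) * hu2]
    exact Real.sqrt_sq (by positivity)
  have e2 : Real.sqrt (2 * u ^ 2 * (1 - Real.cos φ)) = u * c := by
    rw [show 2 * u ^ 2 * (1 - Real.cos φ) = (u * c) ^ 2 by
      linear_combination (-(u ^ 2)) * hc2]
    exact Real.sqrt_sq (by positivity)
  have hl1 : u ^ 2 - 1 = s * u := by linarith
  have hfrac : s * u / (u * c) = t := by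
    rw [hs_def]; field_simp
  have hlog : Real.log (u ^ 2) ≤ s := by
    have h2l := aux_two_log_le hu1.le
    have hlp : Real.log (u ^ 2) = 2 * Real.log u := by
      rw [Real.log_pow]; push_cast; ring
    have hinv : u * u - 1 = s * u := by linear_combination hu2
    have hinv2 : u - u⁻¹ = s := by
      field_simp
      linarith
    linarith
  have h2π : (0:ℝ) < 2 * π := by positivity
  have hK : Real.log (u ^ 2) / (2 * π) + t * (1 - φ / (2 * π)) ≤ κ₁ := by
    have hrw : Real.log (u ^ 2) / (2 * π) + t * (1 - φ / (2 * π))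
        = (Real.log (u ^ 2) + t * (2 * π - φ)) / (2 * π) := by
      field_simp
    rw [hrw, div_le_iff₀ h2π]
    have h1 : Real.log (u ^ 2) ≤ t * c := by rw [← hs_def]; exact hlog
    nlinarith [htD]
  show Real.sqrt ((u ^ 2) ^ 2 - 2 * u ^ 2 * Real.cos φ + 1) / (u ^ 2 - 1) *
      Real.exp (2 * π * (Real.log (u ^ 2) / (2 * π) +
        (u ^ 2 - 1) / Real.sqrt (2 * u ^ 2 * (1 - Real.cos φ)) * (1 - φ / (2 * π))))
      < Real.sqrt (1 + κ₁ ^ 2) / κ₁ * Real.exp (2 * π * κ₁)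
  clear_value kl p U₁
  clear kl p U₁
  rw [e1, e2, hl1, hfrac]
  have hP : u * q / (s * u) = q / s := by
    field_simp
  rw [hP]
  have hE : Real.exp (2 * π * (Real.log (u ^ 2) / (2 * π) + t * (1 - φ / (2 * π))))
      ≤ Real.exp (2 * π * κ₁) :=
    Real.exp_le_exp.mpr (mul_le_mul_of_nonneg_left hK (by positivity))
  have hfront : q / s < Real.sqrt (1 + κ₁ ^ 2) / κ₁ := by
    rw [div_lt_div_iff₀ hs0 hκ₁pos]
    have h1 : q * κ₁ = Real.sqrt ((s ^ 2 + c ^ 2) * κ₁ ^ 2) := by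
      rw [hq_def, Real.sqrt_mul (by positivity : (0:ℝ) ≤ s ^ 2 + c ^ 2),
        Real.sqrt_sq hκ₁pos.le]
    have h2 : Real.sqrt (1 + κ₁ ^ 2) * s = Real.sqrt ((1 + κ₁ ^ 2) * s ^ 2) := by
      rw [Real.sqrt_mul (by positivity : (0:ℝ) ≤ 1 + κ₁ ^ 2), Real.sqrt_sq hs0.le]
    rw [h1, h2]
    apply Real.sqrt_lt_sqrt (by positivity)
    have hsc : κ₁ * c < s := by
      rw [hs_def]; exact mul_lt_mul_of_pos_right htκ hc0
    have hsq : (κ₁ * c) ^ 2 < s ^ 2 :=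
      pow_lt_pow_left₀ hsc (by positivity) two_ne_zero
    linarith only [hsq]
  calc q / s * Real.exp (2 * π * (Real.log (u ^ 2) / (2 * π) + t * (1 - φ / (2 * π))))
      ≤ q / s * Real.exp (2 * π * κ₁) :=
        mul_le_mul_of_nonneg_left hE (by positivity)
    _ < Real.sqrt (1 + κ₁ ^ 2) / κ₁ * Real.exp (2 * π * κ₁) :=
        mul_lt_mul_of_pos_right hfront (Real.exp_pos _)
end
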